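/- Weighted two-variable Lipschitz estimate: Let n ≥ 1, let ρ: ℝ → (0,∞) be monotonically decreasing (antitone), let K ≥ 0, and let a: ℝ × ℝⁿ → ℝ be differentiable with ‖Da(t,x)‖ ≤ K·ρ(t) for all (t,x), where ‖Da(t,x)‖ is the operator norm of the total (Fréchet) derivative. Then for all (t,x) and (t',x') one has |a(t,x) − a(t',x')| ≤ K·( max(ρ(t),ρ(t'))·|t−t'| + min(ρ(t),ρ(t'))·‖x−x'‖ ). -/
import Mathlib

private lemma wtvl_aux
    (n : ℕ)
    (ρ : ℝ → ℝ) (hρanti : Antitone ρ)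
    (K : ℝ) (hK : 0 ≤ K)
    (a : ℝ × EuclideanSpace ℝ (Fin n) → ℝ)
    (ha : Differentiable ℝ a)
    (hda : ∀ p : ℝ × EuclideanSpace ℝ (Fin n), ‖fderiv ℝ a p‖ ≤ K * ρ p.1)
    (t t' : ℝ) (x x' : EuclideanSpace ℝ (Fin n)) (hρ : ρ t' ≤ ρ t) :
    |a (t, x) - a (t', x')| ≤ K * (ρ t * |t - t'| + ρ t' * ‖x - x'‖) := by
  have h1 : |a (t, x) - a (t', x)| ≤ K * ρ t * |t - t'| := by
    have hconv : Convex ℝ (segment ℝ ((t', x) : ℝ × EuclideanSpace ℝ (Fin n)) (t, x)) :=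
      convex_segment _ _
    have hbound : ∀ p ∈ segment ℝ ((t', x) : ℝ × EuclideanSpace ℝ (Fin n)) (t, x),
        ‖fderiv ℝ a p‖ ≤ K * ρ t := by
      intro p hp
      refine (hda p).trans (mul_le_mul_of_nonneg_left ?_ hK)
      obtain ⟨u, v, hu, hv, huv, rfl⟩ := hp
      have hp1 : u * t' + v * t = (u • ((t', x) : ℝ × EuclideanSpace ℝ (Fin n)) +
          v • (t, x)).1 := rfl
      have : min t t' ≤ u * t' + v * t := by
        calc min t t' = u * min t t' + v * min t t' := by
              rw [← add_mul, huv, one_mul]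
          _ ≤ u * t' + v * t :=
              add_le_add (mul_le_mul_of_nonneg_left (min_le_right t t') hu)
                (mul_le_mul_of_nonneg_left (min_le_left t t') hv)
      rw [← hp1]
      refine (hρanti this).trans ?_
      rcases min_cases t t' with ⟨h, _⟩ | ⟨h, _⟩ <;> rw [h]
      all_goals first | exact le_rfl | exact hρ
    have := hconv.norm_image_sub_le_of_norm_fderiv_le
      (fun p _ => ha.differentiableAt) hbound (left_mem_segment ℝ _ _)
      (right_mem_segment ℝ _ _)
    rw [Real.norm_eq_abs] at this
    refine this.trans (le_of_eq ?_)
    congr 1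
    have : ((t, x) : ℝ × EuclideanSpace ℝ (Fin n)) - (t', x) = (t - t', 0) := by
      simp [Prod.ext_iff]
    rw [this, Prod.norm_def]
    simp [Real.norm_eq_abs]
  have h2 : |a (t', x) - a (t', x')| ≤ K * ρ t' * ‖x - x'‖ := by
    have hconv : Convex ℝ (segment ℝ ((t', x') : ℝ × EuclideanSpace ℝ (Fin n)) (t', x)) :=
      convex_segment _ _
    have hbound : ∀ p ∈ segment ℝ ((t', x') : ℝ × EuclideanSpace ℝ (Fin n)) (t', x),
        ‖fderiv ℝ a p‖ ≤ K * ρ t' := by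
      intro p hp
      refine (hda p).trans (mul_le_mul_of_nonneg_left (le_of_eq ?_) hK)
      obtain ⟨u, v, hu, hv, huv, rfl⟩ := hp
      show ρ (u * t' + v * t') = ρ t'
      congr 1
      linear_combination t' * huv
    have := hconv.norm_image_sub_le_of_norm_fderiv_le
      (fun p _ => ha.differentiableAt) hbound (left_mem_segment ℝ _ _)
      (right_mem_segment ℝ _ _)
    rw [Real.norm_eq_abs] at this
    refine this.trans (le_of_eq ?_)
    congr 1
    have : ((t', x) : ℝ × EuclideanSpace ℝ (Fin n)) - (t', x') = (0, x - x') := by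
      simp [Prod.ext_iff]
    rw [this, Prod.norm_def]
    simp
  calc |a (t, x) - a (t', x')| ≤ |a (t, x) - a (t', x)| + |a (t', x) - a (t', x')| :=
        abs_sub_le _ _ _
    _ ≤ K * ρ t * |t - t'| + K * ρ t' * ‖x - x'‖ := add_le_add h1 h2
    _ = K * (ρ t * |t - t'| + ρ t' * ‖x - x'‖) := by ring

/-- Weighted two-variable Lipschitz estimate for functions whose total derivative
is bounded by `K * ρ t`. -/
theorem weighted_two_variable_lipschitz
    (n : ℕ) (hn : 1 ≤ n)
    (ρ : ℝ → ℝ) (hρpos : ∀ t, 0 < ρ t) (hρanti : Antitone ρ)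
    (K : ℝ) (hK : 0 ≤ K)
    (a : ℝ × EuclideanSpace ℝ (Fin n) → ℝ)
    (ha : Differentiable ℝ a)
    (hda : ∀ p : ℝ × EuclideanSpace ℝ (Fin n), ‖fderiv ℝ a p‖ ≤ K * ρ p.1) :
    ∀ (t t' : ℝ) (x x' : EuclideanSpace ℝ (Fin n)),
      |a (t, x) - a (t', x')| ≤
        K * (max (ρ t) (ρ t') * |t - t'| + min (ρ t) (ρ t') * ‖x - x'‖) := by
  intro t t' x x'
  rcases le_total (ρ t') (ρ t) with h | h
  · rw [max_eq_left h, min_eq_right h]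
    exact wtvl_aux n ρ hρanti K hK a ha hda t t' x x' h
  · rw [max_eq_right h, min_eq_left h, abs_sub_comm, abs_sub_comm t t',
      norm_sub_rev x x']
    exact wtvl_aux n ρ hρanti K hK a ha hda t' t x' x h
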